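/- Let 𝓑₁ be the group with presentation ⟨T, X, Y | TXT = X⁻¹, TY⁻¹T = Y, Y⁻¹X⁻¹YXT² = 1⟩, and let G = ⟨A, B, C | A² = 1, B² = 1, C² = 1⟩ be the free product of three copies of the cyclic group of order 2. Then the assignment A ↦ XT, B ↦ T⁻¹Y, C ↦ XTY extends to a group isomorphism G ≅ 𝓑₁, whose inverse is determined by T ↦ ACB, X ↦ ABCA, Y ↦ AC. -/
import Mathlib


/-- Generators of the group `𝓑₁` (the elliptic braid group at `q = 1`). -/
inductive B1Gen : Type
  | T | X | Y

open FreeGroup in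
/-- Relations of `𝓑₁`: `TXT = X⁻¹`, `TY⁻¹T = Y`, `Y⁻¹X⁻¹YXT² = 1`. -/
def B1Rels : Set (FreeGroup B1Gen) :=
  { of B1Gen.T * of B1Gen.X * of B1Gen.T * of B1Gen.X,
    of B1Gen.T * (of B1Gen.Y)⁻¹ * of B1Gen.T * (of B1Gen.Y)⁻¹,
    (of B1Gen.Y)⁻¹ * (of B1Gen.X)⁻¹ * of B1Gen.Y * of B1Gen.X * of B1Gen.T * of B1Gen.T }

/-- The group `𝓑₁`. -/
abbrev B1 : Type := PresentedGroup B1Rels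

/-- Generators of the free product of three copies of `ℤ/2`. -/
inductive TriGen : Type
  | A | B | C

open FreeGroup in
/-- Relations: `A² = B² = C² = 1`. -/
def TriRels : Set (FreeGroup TriGen) :=
  { of TriGen.A * of TriGen.A, of TriGen.B * of TriGen.B, of TriGen.C * of TriGen.C }

/-- The free product `⟨A, B, C | A² = B² = C² = 1⟩` of three copies of `ℤ/2`. -/
abbrev TriInv : Type := PresentedGroup TriRels

namespace TriB1Aux

lemma relOne {α : Type*} {rels : Set (FreeGroup α)} {r : FreeGroup α} (h : r ∈ rels) :
    PresentedGroup.mk rels r = 1 :=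
  (QuotientGroup.eq_one_iff _).2 (Subgroup.subset_normalClosure h)

lemma mk_of {α : Type*} {rels : Set (FreeGroup α)} (x : α) :
    PresentedGroup.mk rels (FreeGroup.of x) = PresentedGroup.of x := rfl

def t : B1 := .of B1Gen.T
def x : B1 := .of B1Gen.X
def y : B1 := .of B1Gen.Y
def a : TriInv := .of TriGen.A
def b : TriInv := .of TriGen.B
def c : TriInv := .of TriGen.C

lemma h1 : t * x * t * x = 1 := by
  have := relOne (rels := B1Rels) (Set.mem_insert _ _)
  simpa [map_mul, mk_of, t, x] using this

lemma h2 : t * y⁻¹ * t * y⁻¹ = 1 := by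
  have := relOne (rels := B1Rels) (Set.mem_insert_of_mem _ (Set.mem_insert _ _))
  simpa [map_mul, mk_of, t, y] using this

lemma h3 : y⁻¹ * x⁻¹ * y * x * t * t = 1 := by
  have := relOne (rels := B1Rels)
    (Set.mem_insert_of_mem _ (Set.mem_insert_of_mem _ rfl))
  simpa [map_mul, mk_of, t, x, y] using this

lemma ha : a * a = 1 := by
  have := relOne (rels := TriRels) (Set.mem_insert _ _)
  simpa [map_mul, mk_of, a] using this

lemma hb : b * b = 1 := by
  have := relOne (rels := TriRels) (Set.mem_insert_of_mem _ (Set.mem_insert _ _))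
  simpa [map_mul, mk_of, b] using this

lemma hc : c * c = 1 := by
  have := relOne (rels := TriRels)
    (Set.mem_insert_of_mem _ (Set.mem_insert_of_mem _ rfl))
  simpa [map_mul, mk_of, c] using this

lemma ha' : ∀ z : TriInv, a * (a * z) = z := fun z => by rw [← mul_assoc, ha, one_mul]
lemma hb' : ∀ z : TriInv, b * (b * z) = z := fun z => by rw [← mul_assoc, hb, one_mul]
lemma hc' : ∀ z : TriInv, c * (c * z) = z := fun z => by rw [← mul_assoc, hc, one_mul]
lemma hainv : a⁻¹ = a := inv_eq_of_mul_eq_one_right ha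
lemma hbinv : b⁻¹ = b := inv_eq_of_mul_eq_one_right hb
lemma hcinv : c⁻¹ = c := inv_eq_of_mul_eq_one_right hc

lemma e1 : x * t * x = t⁻¹ := by
  calc x * t * x = t⁻¹ * (t * x * t * x) := by group
    _ = t⁻¹ := by rw [h1]; group

lemma e3 : y * x * t * t = x * y := by
  calc y * x * t * t = x * y * (y⁻¹ * x⁻¹ * y * x * t * t) := by group
    _ = x * y := by rw [h3]; group

lemma q1 : y * t⁻¹ = t * y⁻¹ := by
  calc y * t⁻¹ = (t * y⁻¹ * t * y⁻¹)⁻¹ * (t * y⁻¹) := by group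
    _ = t * y⁻¹ := by rw [h2]; group

lemma q2 : y⁻¹ * x = x * t * t * y⁻¹ := by
  calc y⁻¹ * x = x * t * t * y⁻¹ * (y * (y⁻¹ * x⁻¹ * y * x * t * t)⁻¹ * y⁻¹) := by group
    _ = x * t * t * y⁻¹ := by rw [h3]; group

lemma q3 : x * t * x * t = 1 := by
  calc x * t * x * t = x * (t * x * t * x) * x⁻¹ := by group
    _ = 1 := by rw [h1]; group

def fmap : TriGen → B1
  | .A => x * t
  | .B => t⁻¹ * y
  | .C => x * t * y

def gmap : B1Gen → TriInv
  | .T => a * c * b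
  | .X => a * b * c * a
  | .Y => a * c

lemma hf : ∀ r ∈ TriRels, FreeGroup.lift fmap r = 1 := by
  intro r hr
  simp only [TriRels, Set.mem_insert_iff, Set.mem_singleton_iff] at hr
  rcases hr with rfl | rfl | rfl <;>
    simp only [map_mul, FreeGroup.lift_apply_of, fmap]
  · exact q3
  · calc t⁻¹ * y * (t⁻¹ * y) = t⁻¹ * (t * (t⁻¹ * (y * t⁻¹) * y)) := by group
      _ = 1 := by rw [q1]; group
  · calc x * t * y * (x * t * y) = x * t * (y * x * t * t) * t⁻¹ * y := by group
      _ = x * t * (x * y) * t⁻¹ * y := by rw [e3]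
      _ = (x * t * x) * (y * t⁻¹) * y := by group
      _ = t⁻¹ * (t * y⁻¹) * y := by rw [e1, q1]
      _ = 1 := by group

lemma hg : ∀ r ∈ B1Rels, FreeGroup.lift gmap r = 1 := by
  intro r hr
  simp only [B1Rels, Set.mem_insert_iff, Set.mem_singleton_iff] at hr
  rcases hr with rfl | rfl | rfl <;>
    simp [map_mul, map_inv, FreeGroup.lift_apply_of, gmap, mul_inv_rev, hainv, hbinv, hcinv,
      mul_assoc, ha, hb, hc, ha', hb', hc']

def f : TriInv →* B1 := PresentedGroup.toGroup hf
def g : B1 →* TriInv := PresentedGroup.toGroup hg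

lemma f_a : f a = x * t := PresentedGroup.toGroup.of hf
lemma f_b : f b = t⁻¹ * y := PresentedGroup.toGroup.of hf
lemma f_c : f c = x * t * y := PresentedGroup.toGroup.of hf
lemma g_t : g t = a * c * b := PresentedGroup.toGroup.of hg
lemma g_x : g x = a * b * c * a := PresentedGroup.toGroup.of hg
lemma g_y : g y = a * c := PresentedGroup.toGroup.of hg

lemma hgf : g.comp f = MonoidHom.id TriInv := by
  ext z
  cases z <;>
    simp only [MonoidHom.comp_apply, MonoidHom.id_apply]
  · show g (f a) = a
    rw [f_a, map_mul, g_x, g_t]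
    simp [mul_assoc, ha, hb, hc, ha', hb', hc']
  · show g (f b) = b
    rw [f_b, map_mul, map_inv, g_t, g_y]
    simp [mul_inv_rev, hainv, hbinv, hcinv, mul_assoc, ha, hb, hc, ha', hb', hc']
  · show g (f c) = c
    rw [f_c, map_mul, map_mul, g_x, g_t, g_y]
    simp [mul_assoc, ha, hb, hc, ha', hb', hc']

lemma hfg : f.comp g = MonoidHom.id B1 := by
  ext z
  cases z <;>
    simp only [MonoidHom.comp_apply, MonoidHom.id_apply]
  · show f (g t) = t
    rw [g_t, map_mul, map_mul, f_a, f_b, f_c]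
    calc x * t * (x * t * y) * (t⁻¹ * y) = (x * t * x) * t * (y * t⁻¹) * y := by group
      _ = t⁻¹ * t * (t * y⁻¹) * y := by rw [e1, q1]
      _ = t := by group
  · show f (g x) = x
    rw [g_x, map_mul, map_mul, map_mul, f_a, f_b, f_c]
    calc x * t * (t⁻¹ * y) * (x * t * y) * (x * t)
        = x * (y * x * t * t) * t⁻¹ * (y * x * t * t) * t⁻¹ := by group
      _ = x * (x * y) * t⁻¹ * (x * y) * t⁻¹ := by rw [e3]
      _ = x * x * (y * t⁻¹) * x * (y * t⁻¹) := by group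
      _ = x * x * (t * y⁻¹) * x * (t * y⁻¹) := by rw [q1]
      _ = x * x * t * (y⁻¹ * x) * t * y⁻¹ := by group
      _ = x * x * t * (x * t * t * y⁻¹) * t * y⁻¹ := by rw [q2]
      _ = x * (x * t * x * t) * (t * y⁻¹ * t * y⁻¹) := by group
      _ = x * 1 * 1 := by rw [q3, h2]
      _ = x := by group
  · show f (g y) = y
    rw [g_y, map_mul, f_a, f_c]
    calc x * t * (x * t * y) = (x * t * x * t) * y := by group
      _ = y := by rw [q3]; group

end TriB1Aux

/-- The assignment `A ↦ XT`, `B ↦ T⁻¹Y`, `C ↦ XTY` extends to a group isomorphism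
`⟨A,B,C | A²=B²=C²=1⟩ ≅ 𝓑₁`, with inverse determined by `T ↦ ACB`, `X ↦ ABCA`,
`Y ↦ AC`. -/
theorem triInv_iso_B1 :
    ∃ φ : TriInv ≃* B1,
      φ (PresentedGroup.of TriGen.A) =
          PresentedGroup.of B1Gen.X * PresentedGroup.of B1Gen.T ∧
      φ (PresentedGroup.of TriGen.B) =
          (PresentedGroup.of B1Gen.T)⁻¹ * PresentedGroup.of B1Gen.Y ∧
      φ (PresentedGroup.of TriGen.C) =
          PresentedGroup.of B1Gen.X * PresentedGroup.of B1Gen.T * PresentedGroup.of B1Gen.Y ∧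
      φ.symm (PresentedGroup.of B1Gen.T) =
          PresentedGroup.of TriGen.A * PresentedGroup.of TriGen.C * PresentedGroup.of TriGen.B ∧
      φ.symm (PresentedGroup.of B1Gen.X) =
          PresentedGroup.of TriGen.A * PresentedGroup.of TriGen.B * PresentedGroup.of TriGen.C *
            PresentedGroup.of TriGen.A ∧
      φ.symm (PresentedGroup.of B1Gen.Y) =
          PresentedGroup.of TriGen.A * PresentedGroup.of TriGen.C := by
  refine ⟨MonoidHom.toMulEquiv TriB1Aux.f TriB1Aux.g TriB1Aux.hgf TriB1Aux.hfg,
    TriB1Aux.f_a, TriB1Aux.f_b, TriB1Aux.f_c, TriB1Aux.g_t, TriB1Aux.g_x, TriB1Aux.g_y⟩
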